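/- arXiv:2206.10104 — 2 statements merged into one kernel-verified Lean document; each statement's English description precedes it below -/
import Mathlib

section
/- Let k be a number field of degree n_k ≥ 2 satisfying the ideal counting estimate ∑_{Nn ≤ Q} 1 = s_k Q + O(Q^{1-1/n_k}). Then with a = 1 - 1/n_k: ∑_{Nn ≤ Q} log(Q/Nn)·(Nn)^{-a} = s_k·n_k²·Q^{1/n_k} + O((log Q)²) for Q ≥ 2. -/
open scoped Classical NumberField
open Finset MeasureTheory

section Aux

variable (K : Type*) [Field K] [NumberField K]

/-- The finset of nonzero ideals of norm `m`. -/
noncomputable def stmt10Fm (m : ℕ) : Finset (Ideal (𝓞 K)) :=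
  (Ideal.finite_setOf_absNorm_eq (S := 𝓞 K) m).toFinset.filter (· ≠ 0)

lemma stmt10_mem_Fm {m : ℕ} {I : Ideal (𝓞 K)} :
    I ∈ stmt10Fm K m ↔ Ideal.absNorm I = m ∧ I ≠ 0 := by
  simp [stmt10Fm]

/-- Number of nonzero ideals of norm `m`, as a real number. -/
noncomputable def stmt10cf (m : ℕ) : ℝ := ((stmt10Fm K m).card : ℝ)

lemma stmt10cf_nonneg (m : ℕ) : 0 ≤ stmt10cf K m := Nat.cast_nonneg _

lemma stmt10cf_zero : stmt10cf K 0 = 0 := by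
  have : stmt10Fm K 0 = ∅ := by
    ext I
    simp only [stmt10_mem_Fm, Finset.notMem_empty, iff_false, not_and]
    intro h
    rw [Ideal.absNorm_eq_zero_iff] at h
    simp [h]
  simp [stmt10cf, this]

lemma stmt10_regroup (g : ℕ → ℝ) (Q : ℝ) (hQ : 0 ≤ Q) :
    (∑' I : Ideal (𝓞 K),
        if I ≠ 0 ∧ (Ideal.absNorm I : ℝ) ≤ Q then g (Ideal.absNorm I) else 0)
      = ∑ m ∈ Finset.Icc 0 ⌊Q⌋₊, stmt10cf K m * g m := by
  have hdisj : (↑(Finset.Icc 0 ⌊Q⌋₊) : Set ℕ).PairwiseDisjoint (stmt10Fm K) := by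
    intro m _ m' _ hmm'
    refine Finset.disjoint_left.mpr fun I hI hI' => hmm' ?_
    rw [← (stmt10_mem_Fm K).mp hI |>.1, ← (stmt10_mem_Fm K).mp hI' |>.1]
  rw [tsum_eq_sum (s := (Finset.Icc 0 ⌊Q⌋₊).biUnion (stmt10Fm K)) ?_]
  · rw [Finset.sum_biUnion hdisj]
    refine Finset.sum_congr rfl fun m hm => ?_
    have hmle : (m : ℝ) ≤ Q := by
      refine le_trans ?_ (Nat.floor_le hQ)
      exact_mod_cast (Finset.mem_Icc.mp hm).2
    rw [Finset.sum_congr rfl (fun I hI => ?_), Finset.sum_const, nsmul_eq_mul]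
    · rfl
    · obtain ⟨hnorm, hne⟩ := (stmt10_mem_Fm K).mp hI
      rw [if_pos ⟨hne, by rw [hnorm]; exact hmle⟩, hnorm]
  · intro I hI
    rw [if_neg]
    rintro ⟨hne, hle⟩
    exact hI <| Finset.mem_biUnion.mpr ⟨Ideal.absNorm I,
      Finset.mem_Icc.mpr ⟨Nat.zero_le _, Nat.le_floor hle⟩,
      (stmt10_mem_Fm K).mpr ⟨rfl, hne⟩⟩

lemma stmt10_count_eq (Q : ℝ) (hQ : 0 ≤ Q) :
    (∑' I : Ideal (𝓞 K), if I ≠ 0 ∧ (Ideal.absNorm I : ℝ) ≤ Q then (1 : ℝ) else 0)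
      = ∑ m ∈ Finset.Icc 0 ⌊Q⌋₊, stmt10cf K m := by
  simpa using stmt10_regroup K (fun _ => (1 : ℝ)) Q hQ

end Aux

set_option maxHeartbeats 1000000 in
lemma stmt10_analytic (n : ℕ) (hn : 2 ≤ n) (sk C : ℝ) (hsk : 0 < sk) (hC : 0 ≤ C)
    (c : ℕ → ℝ) (hc0 : c 0 = 0) (hcnn : ∀ m, 0 ≤ c m)
    (hA : ∀ t : ℝ, 1 ≤ t →
      |(∑ m ∈ Finset.Icc 0 ⌊t⌋₊, c m) - sk * t| ≤ C * t ^ (1 - 1 / (n : ℝ))) :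
    ∃ C' : ℝ, ∀ Q : ℝ, 2 ≤ Q →
      |(∑ m ∈ Finset.Icc 0 ⌊Q⌋₊,
            c m * ((Real.log Q - Real.log m) * (m : ℝ) ^ (-(1 - 1 / (n : ℝ)))))
          - sk * (n : ℝ) ^ 2 * Q ^ (1 / (n : ℝ))| ≤ C' * (Real.log Q) ^ 2 := by
  have hlog2 : 0 < Real.log 2 := Real.log_pos (by norm_num)
  set ν : ℝ := (n : ℝ) with hνdef
  have hν2 : (2 : ℝ) ≤ ν := by rw [hνdef]; exact_mod_cast hn
  have hν0 : 0 < ν := by linarith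
  set a : ℝ := 1 - 1 / ν with hadef
  have hinv : 1 / ν ≤ 1 / 2 := by
    rw [div_le_div_iff₀ hν0 (by norm_num)]; linarith
  have hinv0 : 0 < 1 / ν := by positivity
  have ha0 : 0 < a := by rw [hadef]; linarith
  have ha1 : a < 1 := by rw [hadef]; linarith
  refine ⟨C / Real.log 2 + C + sk * ν / (Real.log 2) ^ 2 + sk * ν / Real.log 2
      + sk * ν ^ 2 / (Real.log 2) ^ 2, ?_⟩
  intro Q hQ
  have hQ1 : (1 : ℝ) ≤ Q := by linarith
  have hQ0 : (0 : ℝ) < Q := by linarith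
  set L : ℝ := Real.log Q with hLdef
  have hL2 : Real.log 2 ≤ L := Real.log_le_log (by norm_num) hQ
  have hL0 : 0 < L := lt_of_lt_of_le hlog2 hL2
  -- the functions
  set f : ℝ → ℝ := fun t => (L - Real.log t) * t ^ (-a) with hfdef
  set g : ℝ → ℝ := fun t => -((1 + a * (L - Real.log t)) * t ^ (-a - 1)) with hgdef
  have hderiv : ∀ t : ℝ, 0 < t → HasDerivAt f (g t) t := by
    intro t ht
    have h1 : HasDerivAt (fun t : ℝ => L - Real.log t) (-t⁻¹) t :=
      (Real.hasDerivAt_log ht.ne').const_sub L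
    have h2 : HasDerivAt (fun t : ℝ => t ^ (-a)) (-a * t ^ (-a - 1)) t :=
      Real.hasDerivAt_rpow_const (Or.inl ht.ne')
    have h3 := h1.mul h2
    refine h3.congr_deriv ?_
    have e1 : t ^ (-a) = t ^ (-a - 1) * t := by
      rw [← Real.rpow_add_one ht.ne']; ring_nf
    rw [hgdef]
    simp only []
    rw [e1]
    field_simp
    ring
  -- continuity of g on positive reals
  have hgcont : ∀ s : Set ℝ, s ⊆ Set.Ioi 0 → ContinuousOn g s := by
    intro s hs t ht
    have ht0 : 0 < t := hs ht
    refine ContinuousAt.continuousWithinAt ?_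
    have h1 : ContinuousAt Real.log t := Real.continuousAt_log ht0.ne'
    have h2 : ContinuousAt (fun t : ℝ => t ^ (-a - 1)) t :=
      Real.continuousAt_rpow_const t _ (Or.inl ht0.ne')
    exact ((continuousAt_const.add (continuousAt_const.mul
      (continuousAt_const.sub h1))).mul h2).neg
  have hIcc_pos : Set.Icc (1:ℝ) Q ⊆ Set.Ioi 0 := fun t ht => lt_of_lt_of_le one_pos ht.1
  have hdiff : ∀ t ∈ Set.Icc (1:ℝ) Q, DifferentiableAt ℝ f t :=
    fun t ht => (hderiv t (hIcc_pos ht)).differentiableAt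
  have hint : IntegrableOn (deriv f) (Set.Icc 1 Q) := by
    refine ((hgcont _ hIcc_pos).integrableOn_Icc).congr_fun
      (fun t ht => ((hderiv t (hIcc_pos ht)).deriv).symm) measurableSet_Icc
  have habel := sum_mul_eq_sub_sub_integral_mul c zero_le_one hQ1 hdiff hint
  rw [Nat.floor_one] at habel
  have hfloorQ : 1 ≤ ⌊Q⌋₊ := Nat.le_floor (by exact_mod_cast hQ1)
  -- value facts
  have hfQ : f Q = 0 := by rw [hfdef]; simp [hLdef]
  have hf1 : f 1 = L := by rw [hfdef]; simp
  have hA1 : (∑ m ∈ Finset.Icc 0 1, c m) = c 1 := by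
    rw [show Finset.Icc 0 1 = ({0, 1} : Finset ℕ) from rfl]
    simp [hc0]
  -- split the sum
  have hsplit : Finset.Icc 0 ⌊Q⌋₊ = Finset.Icc 0 1 ∪ Finset.Ioc 1 ⌊Q⌋₊ := by
    ext m; simp only [Finset.mem_Icc, Finset.mem_union, Finset.mem_Ioc]; omega
  have hdisj : Disjoint (Finset.Icc 0 1) (Finset.Ioc 1 ⌊Q⌋₊) := by
    refine Finset.disjoint_left.mpr fun m hm hm' => ?_
    simp only [Finset.mem_Icc, Finset.mem_Ioc] at hm hm'; omega
  have hkey : (∑ m ∈ Finset.Icc 0 ⌊Q⌋₊, c m * f m)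
      = - ∫ t in Set.Ioc (1:ℝ) Q, deriv f t * (∑ m ∈ Finset.Icc 0 ⌊t⌋₊, c m) := by
    rw [hsplit, Finset.sum_union hdisj]
    have e1 : (∑ m ∈ Finset.Icc 0 1, c m * f m) = c 1 * L := by
      rw [show Finset.Icc 0 1 = ({0, 1} : Finset ℕ) from rfl]
      simp [hc0, hf1]
    have e2 : (∑ m ∈ Finset.Ioc 1 ⌊Q⌋₊, c m * f m)
        = ∑ m ∈ Finset.Ioc 1 ⌊Q⌋₊, f m * c m :=
      Finset.sum_congr rfl fun m _ => mul_comm _ _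
    rw [e1, e2, habel, hfQ, hf1, hA1]
    ring
  -- replace deriv f by g inside the integral
  have hIcongr : (∫ t in Set.Ioc (1:ℝ) Q, deriv f t * (∑ m ∈ Finset.Icc 0 ⌊t⌋₊, c m))
      = ∫ t in Set.Ioc (1:ℝ) Q, g t * (∑ m ∈ Finset.Icc 0 ⌊t⌋₊, c m) := by
    refine setIntegral_congr_fun measurableSet_Ioc fun t ht => ?_
    rw [(hderiv t (lt_trans one_pos ht.1)).deriv]
  have hIoc_pos : Set.Ioc (1:ℝ) Q ⊆ Set.Ioi 0 := fun t ht => lt_trans one_pos ht.1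
  have hIoc_sub : Set.Ioc (1:ℝ) Q ⊆ Set.Icc 1 Q := Set.Ioc_subset_Icc_self
  -- integrability of g * (sk * t)
  have hInt1 : IntegrableOn (fun t => g t * (sk * t)) (Set.Ioc 1 Q) := by
    refine (((hgcont _ hIcc_pos).mul
      (continuousOn_const.mul continuousOn_id)).integrableOn_Icc).mono_set hIoc_sub
  -- integrability of g * AA
  have hInt2 : IntegrableOn (fun t => g t * (∑ m ∈ Finset.Icc 0 ⌊t⌋₊, c m)) (Set.Ioc 1 Q) := by
    have hgint : IntegrableOn g (Set.Ioc 1 Q) :=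
      ((hgcont _ hIcc_pos).integrableOn_Icc).mono_set hIoc_sub
    have hmeas : AEStronglyMeasurable (fun t : ℝ => ∑ m ∈ Finset.Icc 0 ⌊t⌋₊, c m)
        (volume.restrict (Set.Ioc 1 Q)) := by
      exact ((measurable_from_nat (f := fun n => ∑ m ∈ Finset.Icc 0 n, c m)).comp
        Nat.measurable_floor).aestronglyMeasurable
    have hbdd : ∀ᵐ t ∂(volume.restrict (Set.Ioc (1:ℝ) Q)),
        ‖∑ m ∈ Finset.Icc 0 ⌊t⌋₊, c m‖ ≤ ∑ m ∈ Finset.Icc 0 ⌊Q⌋₊, c m := by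
      refine (ae_restrict_iff' measurableSet_Ioc).mpr (Filter.Eventually.of_forall fun t ht => ?_)
      rw [Real.norm_eq_abs, abs_of_nonneg (Finset.sum_nonneg fun m _ => hcnn m)]
      exact Finset.sum_le_sum_of_subset_of_nonneg
        (Finset.Icc_subset_Icc le_rfl (Nat.floor_le_floor ht.2)) fun m _ _ => hcnn m
    have := (Integrable.bdd_mul (c := ∑ m ∈ Finset.Icc 0 ⌊Q⌋₊, c m) hgint hmeas hbdd)
    exact this.congr (Filter.Eventually.of_forall fun t => mul_comm _ _)
  -- the error integrand
  have hIntE : IntegrableOn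
      (fun t => g t * ((∑ m ∈ Finset.Icc 0 ⌊t⌋₊, c m) - sk * t)) (Set.Ioc 1 Q) := by
    have := hInt2.sub hInt1
    refine this.congr (Filter.Eventually.of_forall fun t => ?_)
    simp only [Pi.sub_apply]; ring
  have hsplitInt : (∫ t in Set.Ioc (1:ℝ) Q, g t * (∑ m ∈ Finset.Icc 0 ⌊t⌋₊, c m))
      = (∫ t in Set.Ioc (1:ℝ) Q, g t * ((∑ m ∈ Finset.Icc 0 ⌊t⌋₊, c m) - sk * t))
        + ∫ t in Set.Ioc (1:ℝ) Q, g t * (sk * t) := by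
    rw [← integral_add hIntE hInt1]
    refine setIntegral_congr_fun measurableSet_Ioc fun t _ => ?_
    ring
  have ht0 : ∀ t ∈ Set.uIcc (1:ℝ) Q, 0 < t := by
    intro t ht
    rw [Set.uIcc_of_le hQ1] at ht
    exact lt_of_lt_of_le one_pos ht.1
  -- FTC for the main term
  have hGd : ∀ t ∈ Set.uIcc (1:ℝ) Q,
      HasDerivAt (fun t : ℝ => -(sk * (ν * t ^ (1/ν)
          + a * (ν * (t ^ (1/ν) * (L - Real.log t)) + ν^2 * t ^ (1/ν)))))
        (g t * (sk * t)) t := by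
    intro t ht
    have htp : 0 < t := ht0 t ht
    have hp : HasDerivAt (fun t : ℝ => t ^ (1/ν)) ((1/ν) * t ^ (1/ν - 1)) t :=
      Real.hasDerivAt_rpow_const (Or.inl htp.ne')
    have hl : HasDerivAt (fun t : ℝ => L - Real.log t) (-t⁻¹) t :=
      (Real.hasDerivAt_log htp.ne').const_sub L
    have hm := hp.mul hl
    have hsum2 := ((hm.const_mul ν).add (hp.const_mul (ν^2))).const_mul a
    have h7 := (((hp.const_mul ν).add hsum2).const_mul sk).neg
    refine h7.congr_deriv ?_
    have eA : t ^ (1/ν) * t⁻¹ = t ^ (1/ν - 1) := by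
      rw [← Real.rpow_neg_one t, ← Real.rpow_add htp]
      congr 1
    have eB : t ^ (-a - 1) * t = t ^ (1/ν - 1) := by
      rw [← Real.rpow_add_one htp.ne']
      congr 1
      rw [hadef]; ring
    rw [hgdef]
    simp only []
    rw [show -((1 + a * (L - Real.log t)) * t ^ (-a - 1)) * (sk * t)
        = -((1 + a * (L - Real.log t)) * (t ^ (-a - 1) * t) * sk) from by ring, eB]
    rw [show ν * (1 / ν * t ^ (1 / ν - 1) * (L - Real.log t) + t ^ (1 / ν) * -t⁻¹)
        = ν * (1 / ν * t ^ (1 / ν - 1) * (L - Real.log t)) - ν * (t ^ (1/ν) * t⁻¹) from by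
          ring, eA]
    field_simp
    ring
  have hIi1 : IntervalIntegrable (fun t => g t * (sk * t)) volume 1 Q :=
    (intervalIntegrable_iff_integrableOn_Ioc_of_le hQ1).mpr hInt1
  have hmainval : (∫ t in Set.Ioc (1:ℝ) Q, g t * (sk * t))
      = -(sk * ν^2 * Q ^ (1/ν)) + sk * ν + sk * a * ν * L + sk * a * ν^2 := by
    rw [← intervalIntegral.integral_of_le hQ1,
      intervalIntegral.integral_eq_sub_of_hasDerivAt hGd hIi1]
    have haν : a * ν^2 = ν^2 - ν := by rw [hadef]; field_simp
    simp only [Real.one_rpow, Real.log_one, ← hLdef, sub_self]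
    linear_combination (-(sk * Q ^ (1/ν))) * haν
  -- the pointwise bound function and its integral
  have hbcont : ContinuousOn (fun t : ℝ => C * ((1 + a * (L - Real.log t)) / t))
      (Set.Icc 1 Q) := by
    intro t ht
    have htp : 0 < t := hIcc_pos ht
    refine ContinuousAt.continuousWithinAt ?_
    exact continuousAt_const.mul (((continuousAt_const.add (continuousAt_const.mul
      (continuousAt_const.sub (Real.continuousAt_log htp.ne')))).div
      continuousAt_id htp.ne'))
  have hbint : IntegrableOn (fun t : ℝ => C * ((1 + a * (L - Real.log t)) / t))
      (Set.Ioc 1 Q) := (hbcont.integrableOn_Icc).mono_set hIoc_sub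
  have hHd : ∀ t ∈ Set.uIcc (1:ℝ) Q,
      HasDerivAt (fun t : ℝ => C * (Real.log t + a * (L * Real.log t - Real.log t ^ 2 / 2)))
        (C * ((1 + a * (L - Real.log t)) / t)) t := by
    intro t ht
    have htp : 0 < t := ht0 t ht
    have hlog := Real.hasDerivAt_log htp.ne'
    have hsq := (hlog.pow 2).div_const 2
    have h7 := (hlog.add (((hlog.const_mul L).sub hsq).const_mul a)).const_mul C
    refine h7.congr_deriv ?_
    field_simp
    ring
  have hIib : IntervalIntegrable (fun t : ℝ => C * ((1 + a * (L - Real.log t)) / t))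
      volume 1 Q := (intervalIntegrable_iff_integrableOn_Ioc_of_le hQ1).mpr hbint
  have hbval : (∫ t in Set.Ioc (1:ℝ) Q, C * ((1 + a * (L - Real.log t)) / t))
      = C * (L + a * L^2 / 2) := by
    rw [← intervalIntegral.integral_of_le hQ1,
      intervalIntegral.integral_eq_sub_of_hasDerivAt hHd hIib]
    simp only [Real.log_one, ← hLdef]
    ring
  -- pointwise bound on the error integrand
  have herrbound : |∫ t in Set.Ioc (1:ℝ) Q, g t * ((∑ m ∈ Finset.Icc 0 ⌊t⌋₊, c m) - sk * t)|
      ≤ C * (L + a * L^2 / 2) := by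
    rw [← hbval, ← Real.norm_eq_abs]
    refine norm_integral_le_of_norm_le hbint ?_
    refine (ae_restrict_iff' measurableSet_Ioc).mpr (Filter.Eventually.of_forall fun t ht => ?_)
    have ht1 : 1 < t := ht.1
    have htp : 0 < t := lt_trans one_pos ht1
    have hlogle : Real.log t ≤ L := by
      rw [hLdef]; exact Real.log_le_log htp ht.2
    have hfac : 0 ≤ 1 + a * (L - Real.log t) := by nlinarith
    have habsg : |g t| = (1 + a * (L - Real.log t)) * t ^ (-a - 1) := by
      rw [hgdef]
      simp only []
      rw [abs_neg, abs_of_nonneg (mul_nonneg hfac (Real.rpow_pos_of_pos htp _).le)]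
    have hpowid : t ^ (-a - 1) * t ^ a = t⁻¹ := by
      rw [← Real.rpow_add htp, ← Real.rpow_neg_one t]
      congr 1
      ring
    calc ‖g t * ((∑ m ∈ Finset.Icc 0 ⌊t⌋₊, c m) - sk * t)‖
        = |g t| * |(∑ m ∈ Finset.Icc 0 ⌊t⌋₊, c m) - sk * t| := abs_mul _ _
      _ ≤ ((1 + a * (L - Real.log t)) * t ^ (-a - 1)) * (C * t ^ a) := by
          rw [habsg]
          exact mul_le_mul_of_nonneg_left (hA t ht1.le)
            (mul_nonneg hfac (Real.rpow_pos_of_pos htp _).le)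
      _ = C * ((1 + a * (L - Real.log t)) / t) := by
          rw [show ((1 + a * (L - Real.log t)) * t ^ (-a - 1)) * (C * t ^ a)
              = C * ((1 + a * (L - Real.log t)) * (t ^ (-a - 1) * t ^ a)) from by ring,
            hpowid, div_eq_mul_inv]
  -- final assembly
  have hexpr : (∑ m ∈ Finset.Icc 0 ⌊Q⌋₊,
        c m * ((L - Real.log m) * (m : ℝ) ^ (-a))) - sk * ν^2 * Q ^ (1/ν)
      = -(∫ t in Set.Ioc (1:ℝ) Q, g t * ((∑ m ∈ Finset.Icc 0 ⌊t⌋₊, c m) - sk * t))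
        - (sk * ν + sk * a * ν * L + sk * a * ν^2) := by
    rw [show (∑ m ∈ Finset.Icc 0 ⌊Q⌋₊, c m * ((L - Real.log m) * (m : ℝ) ^ (-a)))
        = ∑ m ∈ Finset.Icc 0 ⌊Q⌋₊, c m * f m from rfl]
    rw [hkey, hIcongr, hsplitInt, hmainval]
    ring
  have hKnn : 0 ≤ sk * ν + sk * a * ν * L + sk * a * ν^2 := by positivity
  have habs : |(∑ m ∈ Finset.Icc 0 ⌊Q⌋₊,
        c m * ((L - Real.log m) * (m : ℝ) ^ (-a))) - sk * ν^2 * Q ^ (1/ν)|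
      ≤ C * (L + a * L^2 / 2) + (sk * ν + sk * a * ν * L + sk * a * ν^2) := by
    rw [hexpr]
    refine (abs_sub _ _).trans ?_
    rw [abs_neg, abs_of_nonneg hKnn]
    exact add_le_add_left herrbound _
  refine habs.trans ?_
  clear habs hexpr herrbound hbval hIib hHd hbint hbcont hmainval hIi1 hGd ht0
    hsplitInt hIntE hInt2 hInt1 hIoc_sub hIoc_pos hIcongr hkey hdisj hsplit hA1 hf1 hfQ
    hfloorQ habel hint hdiff hIcc_pos hgcont hderiv hA hc0 hcnn hinv hinv0 hQ hQ1 hQ0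
  clear hfdef hgdef
  clear_value f g
  clear f g
  clear_value ν a L
  clear hνdef hadef hLdef hn
  have hlog2sq : 0 < Real.log 2 ^ 2 := by positivity
  have t1 : C * L ≤ C / Real.log 2 * L^2 := by
    rw [div_mul_eq_mul_div, le_div_iff₀ hlog2]
    nlinarith [mul_nonneg hC hL0.le]
  have t2 : C * (a * L^2 / 2) ≤ C * L^2 := by
    nlinarith [mul_le_mul_of_nonneg_left ha1.le (mul_nonneg hC (sq_nonneg L)),
      mul_nonneg (mul_nonneg hC (sq_nonneg L)) ha0.le]
  have t3 : sk * ν ≤ sk * ν / Real.log 2 ^ 2 * L^2 := by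
    rw [div_mul_eq_mul_div, le_div_iff₀ hlog2sq]
    nlinarith [mul_pos hsk hν0, mul_le_mul hL2 hL2 hlog2.le hL0.le]
  have t4 : sk * a * ν * L ≤ sk * ν / Real.log 2 * L^2 := by
    rw [div_mul_eq_mul_div, le_div_iff₀ hlog2]
    have h1 : a * Real.log 2 ≤ L := by nlinarith
    nlinarith [mul_pos hsk hν0, mul_pos (mul_pos hsk hν0) hL0]
  have t5 : sk * a * ν^2 ≤ sk * ν^2 / Real.log 2 ^ 2 * L^2 := by
    rw [div_mul_eq_mul_div, le_div_iff₀ hlog2sq]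
    have hsq : Real.log 2 ^ 2 ≤ L ^ 2 := by nlinarith
    have h2 : sk * a * ν ^ 2 * Real.log 2 ^ 2 ≤ sk * 1 * ν ^ 2 * L ^ 2 := by
      gcongr
      all_goals first | exact ha1.le | exact hsq
    linarith
  nlinarith [t1, t2, t3, t4, t5]

/-- Assuming the ideal counting theorem, with `a = 1 - 1/n_k` one has
`∑_{N n ≤ Q} log(Q/N n) (N n)^{-a} = s_k n_k² Q^{1/n_k} + O((log Q)²)` for `Q ≥ 2`. -/
theorem stmt10 {k : Type*} [Field k] [NumberField k]
    (hdeg : 2 ≤ Module.finrank ℚ k) (sk C : ℝ) (hsk : 0 < sk)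
    (hcount : ∀ Q : ℝ, 1 ≤ Q →
      |(∑' I : Ideal (𝓞 k), if I ≠ 0 ∧ (Ideal.absNorm I : ℝ) ≤ Q then (1 : ℝ) else 0)
          - sk * Q| ≤ C * Q ^ (1 - 1 / (Module.finrank ℚ k : ℝ))) :
    ∃ C' : ℝ, ∀ Q : ℝ, 2 ≤ Q →
      |(∑' I : Ideal (𝓞 k),
          if I ≠ 0 ∧ (Ideal.absNorm I : ℝ) ≤ Q then
            Real.log (Q / (Ideal.absNorm I : ℝ)) *
              (Ideal.absNorm I : ℝ) ^ (-(1 - 1 / (Module.finrank ℚ k : ℝ))) else 0)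
        - sk * (Module.finrank ℚ k : ℝ) ^ 2 * Q ^ (1 / (Module.finrank ℚ k : ℝ))|
          ≤ C' * (Real.log Q) ^ 2 := by
  have hC : 0 ≤ C := by
    have h := hcount 1 le_rfl
    have h1 : (0:ℝ) ≤ C * 1 ^ (1 - 1 / (Module.finrank ℚ k : ℝ)) :=
      le_trans (abs_nonneg _) h
    rwa [Real.one_rpow, mul_one] at h1
  have hA : ∀ t : ℝ, 1 ≤ t →
      |(∑ m ∈ Finset.Icc 0 ⌊t⌋₊, stmt10cf k m) - sk * t|
        ≤ C * t ^ (1 - 1 / (Module.finrank ℚ k : ℝ)) := by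
    intro t ht
    have h := hcount t ht
    rwa [stmt10_count_eq k t (by linarith)] at h
  obtain ⟨C', hC'⟩ := stmt10_analytic (Module.finrank ℚ k) hdeg sk C hsk hC
    (stmt10cf k) (stmt10cf_zero k) (stmt10cf_nonneg k) hA
  refine ⟨C', fun Q hQ => ?_⟩
  have h0Q : (0:ℝ) ≤ Q := by linarith
  have hre := stmt10_regroup k
    (fun m => Real.log (Q / (m : ℝ)) * (m : ℝ) ^ (-(1 - 1 / (Module.finrank ℚ k : ℝ))))
    Q h0Q
  rw [hre]
  have hsum : (∑ m ∈ Finset.Icc 0 ⌊Q⌋₊, stmt10cf k m *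
        (Real.log (Q / (m : ℝ)) * (m : ℝ) ^ (-(1 - 1 / (Module.finrank ℚ k : ℝ)))))
      = ∑ m ∈ Finset.Icc 0 ⌊Q⌋₊, stmt10cf k m *
        ((Real.log Q - Real.log m) * (m : ℝ) ^ (-(1 - 1 / (Module.finrank ℚ k : ℝ)))) := by
    refine Finset.sum_congr rfl fun m _ => ?_
    rcases Nat.eq_zero_or_pos m with h0 | h1
    · subst h0; simp [stmt10cf_zero]
    · rw [Real.log_div (by linarith : Q ≠ 0) (by exact_mod_cast h1.ne' : (m:ℝ) ≠ 0)]
  rw [hsum]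
  exact hC' Q hQ
end

section
/- Let k be a number field of degree n_k ≥ 3 satisfying the squarefree counting estimate ∑_{Nn ≤ Q} μ_k(n)² = (s_k/ζ_k(2))Q + O(Q^{1-1/n_k}). Then for any squarefree nonzero ideal r of O_k: ∑_{Nn ≤ Q, (n,r)=(1)} μ_k(n)² = (s_k/ζ_k(2))·(Nr/κ(r))·Q + O(Q^{1-1/n_k}·σ_{-1/(n_k+1)}(r)), where κ(r) = Nr·∏_{p|r}(1 + 1/Np), σ_a(r) = ∑_{d|r}(Nd)^a, and the implied constant is independent of r. -/
open scoped Classical NumberField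
open UniqueFactorizationMonoid

variable {k : Type*} [Field k] [NumberField k]

/-- `ζ_k(2) = ∑_{n ≠ 0} (N n)⁻²`, the Dedekind zeta value at `2`. -/
noncomputable def zetaK2 (k : Type*) [Field k] [NumberField k] : ℝ :=
  ∑' I : Ideal (𝓞 k), if I ≠ 0 then ((Ideal.absNorm I : ℝ) ^ 2)⁻¹ else 0

/-- `κ(r) = N r ∏_{p | r}(1 + 1/N p)`. -/
noncomputable def kappaK (I : Ideal (𝓞 k)) : ℝ :=
  (Ideal.absNorm I : ℝ) * ∏ p ∈ (factors I).toFinset, (1 + 1 / (Ideal.absNorm p : ℝ))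

/-- `σ_a(r) = ∑_{d | r} (N d)^a`. -/
noncomputable def sigmaK (a : ℝ) (n : Ideal (𝓞 k)) : ℝ :=
  ∑' d : Ideal (𝓞 k), if d ∣ n then (Ideal.absNorm d : ℝ) ^ a else 0


set_option linter.unusedSectionVars false
set_option linter.unusedVariables false
set_option synthInstance.maxHeartbeats 400000
set_option maxHeartbeats 1600000

namespace Stmt15Aux


variable {k : Type*} [Field k] [NumberField k]

/-- The indicator summand. -/
noncomputable def g (r : Ideal (𝓞 k)) (Q : ℝ) (I : Ideal (𝓞 k)) : ℝ :=
  if I ≠ 0 ∧ Squarefree I ∧ (Ideal.absNorm I : ℝ) ≤ Q ∧ I ⊔ r = ⊤ then 1 else 0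

/-- The counting function. -/
noncomputable def cnt (r : Ideal (𝓞 k)) (Q : ℝ) : ℝ := ∑' I, g r Q I

lemma g_nonneg (r : Ideal (𝓞 k)) (Q : ℝ) (I : Ideal (𝓞 k)) : 0 ≤ g r Q I := by
  unfold g; split <;> norm_num

noncomputable def bigFinset (k : Type*) [Field k] [NumberField k] (Q : ℝ) :
    Finset (Ideal (𝓞 k)) :=
  (Ideal.finite_setOf_absNorm_le (S := 𝓞 k) ⌊Q⌋₊).toFinset

lemma g_eq_zero_of_not_mem {r : Ideal (𝓞 k)} {Q : ℝ} {I : Ideal (𝓞 k)}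
    (hI : I ∉ bigFinset k Q) : g r Q I = 0 := by
  rw [g, if_neg]
  rintro ⟨h0, hsf, hQ, hcop⟩
  exact hI (by simpa [bigFinset, Set.Finite.mem_toFinset] using Nat.le_floor hQ)

lemma cnt_eq_sum (r : Ideal (𝓞 k)) (Q : ℝ) :
    cnt r Q = ∑ I ∈ bigFinset k Q, g r Q I :=
  tsum_eq_sum fun _ hI => g_eq_zero_of_not_mem hI

lemma summable_g (r : Ideal (𝓞 k)) (Q : ℝ) : Summable (g r Q) :=
  summable_of_ne_finset_zero (s := bigFinset k Q) fun _ hI => g_eq_zero_of_not_mem hI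

lemma sup_prime_eq_top_iff {p I : Ideal (𝓞 k)} (hp : Prime p) : I ⊔ p = ⊤ ↔ ¬ p ∣ I := by
  have hmax : p.IsMaximal :=
    ((Ideal.prime_iff_isPrime hp.ne_zero).mp hp).isMaximal hp.ne_zero
  rw [Ideal.dvd_iff_le]
  constructor
  · intro h hle
    rw [sup_eq_right.mpr hle] at h
    exact hmax.ne_top h
  · intro hle
    refine (Ideal.isMaximal_def.mp hmax).2 (I ⊔ p) (lt_of_le_of_ne le_sup_right fun h => ?_)
    exact hle (h ▸ le_sup_left)

lemma sup_mul_eq_top_iff {I a b : Ideal (𝓞 k)} :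
    I ⊔ (a * b) = ⊤ ↔ (I ⊔ a = ⊤ ∧ I ⊔ b = ⊤) := by
  rw [← Ideal.isCoprime_iff_sup_eq, ← Ideal.isCoprime_iff_sup_eq, ← Ideal.isCoprime_iff_sup_eq]
  exact ⟨fun h => ⟨h.of_mul_right_left, h.of_mul_right_right⟩, fun ⟨h1, h2⟩ => h1.mul_right h2⟩

lemma two_le_absNorm {p : Ideal (𝓞 k)} (hp : Prime p) : 2 ≤ Ideal.absNorm p := by
  rcases Nat.lt_or_ge (Ideal.absNorm p) 2 with h | h
  · interval_cases h' : Ideal.absNorm p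
    · exact absurd (Ideal.absNorm_eq_zero_iff.mp h') hp.ne_zero
    · exact absurd (Ideal.isUnit_iff.mpr (Ideal.absNorm_eq_one_iff.mp h')) hp.not_unit
  · exact h
variable {k : Type*} [Field k] [NumberField k]

lemma squarefree_prime_mul_iff {p m : Ideal (𝓞 k)} (hp : Prime p) :
    Squarefree (p * m) ↔ ¬ p ∣ m ∧ Squarefree m := by
  rw [squarefree_mul_iff, hp.irreducible.isRelPrime_iff_not_dvd]
  exact ⟨fun ⟨h1, _, h3⟩ => ⟨h1, h3⟩, fun ⟨h1, h2⟩ => ⟨h1, hp.squarefree, h2⟩⟩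

lemma absNorm_mul' (I J : Ideal (𝓞 k)) :
    Ideal.absNorm (I * J) = Ideal.absNorm I * Ideal.absNorm J :=
  _root_.map_mul Ideal.absNorm I J

lemma sup_prime_eq_top_iff' {p I : Ideal (𝓞 k)} (hp : Prime p) : I ⊔ p = ⊤ ↔ ¬ p ∣ I := by
  have hmax : p.IsMaximal :=
    ((Ideal.prime_iff_isPrime hp.ne_zero).mp hp).isMaximal hp.ne_zero
  rw [Ideal.dvd_iff_le]
  constructor
  · intro h hle
    rw [sup_eq_right.mpr hle] at h
    exact hmax.ne_top h
  · intro hle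
    refine (Ideal.isMaximal_def.mp hmax).2 (I ⊔ p) (lt_of_le_of_ne le_sup_right fun h => ?_)
    exact hle (h ▸ le_sup_left)

lemma sup_mul_eq_top_iff' {I a b : Ideal (𝓞 k)} :
    I ⊔ (a * b) = ⊤ ↔ (I ⊔ a = ⊤ ∧ I ⊔ b = ⊤) := by
  rw [← Ideal.isCoprime_iff_sup_eq, ← Ideal.isCoprime_iff_sup_eq, ← Ideal.isCoprime_iff_sup_eq]
  exact ⟨fun h => ⟨h.of_mul_right_left, h.of_mul_right_right⟩, fun ⟨h1, h2⟩ => h1.mul_right h2⟩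

lemma two_le_absNorm' {p : Ideal (𝓞 k)} (hp : Prime p) : 2 ≤ Ideal.absNorm p := by
  rcases Nat.lt_or_ge (Ideal.absNorm p) 2 with h | h
  · interval_cases h' : Ideal.absNorm p
    · exact absurd (Ideal.absNorm_eq_zero_iff.mp h') hp.ne_zero
    · exact absurd (Ideal.isUnit_iff.mpr (Ideal.absNorm_eq_one_iff.mp h')) hp.not_unit
  · exact h

lemma cond_iff {p r : Ideal (𝓞 k)} (hp : Prime p) (hpr : ¬ p ∣ r) (Q : ℝ) (m : Ideal (𝓞 k)) :
    (p * m ≠ 0 ∧ Squarefree (p * m) ∧ (Ideal.absNorm (p * m) : ℝ) ≤ Q ∧ (p * m) ⊔ r = ⊤)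
      ↔ (m ≠ 0 ∧ Squarefree m ∧ (Ideal.absNorm m : ℝ) ≤ Q / (Ideal.absNorm p : ℝ)
          ∧ m ⊔ (p * r) = ⊤) := by
  have hNp : (0 : ℝ) < (Ideal.absNorm p : ℝ) := by
    have := two_le_absNorm' hp
    exact_mod_cast lt_of_lt_of_le two_pos (by exact_mod_cast this)
  rw [mul_ne_zero_iff, squarefree_prime_mul_iff hp, absNorm_mul', sup_comm (p * m) r,
    sup_mul_eq_top_iff', sup_mul_eq_top_iff', sup_prime_eq_top_iff' hp (I := m),
    le_div_iff₀ hNp, sup_prime_eq_top_iff' hp (I := r), sup_comm r m]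
  push_cast
  constructor
  · rintro ⟨⟨-, h0⟩, ⟨hpm, hsf⟩, hle, -, hmr⟩
    exact ⟨h0, hsf, by linarith [mul_comm (Ideal.absNorm p : ℝ) (Ideal.absNorm m : ℝ)], hpm, hmr⟩
  · rintro ⟨h0, hsf, hle, hpm, hmr⟩
    exact ⟨⟨hp.ne_zero, h0⟩, ⟨hpm, hsf⟩, by nlinarith, hpr, hmr⟩

lemma cnt_rec {p r : Ideal (𝓞 k)} (hp : Prime p) (hpr : ¬ p ∣ r) (Q : ℝ) :
    cnt r Q = cnt (p * r) Q + cnt (p * r) (Q / (Ideal.absNorm p : ℝ)) := by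
  classical
  set gd : Ideal (𝓞 k) → ℝ := fun I => if p ∣ I then g r Q I else 0 with hgd
  have hsplit : ∀ I, g r Q I = g (p * r) Q I + gd I := by
    intro I
    by_cases hdvd : p ∣ I
    · have h1 : g (p * r) Q I = 0 := by
        rw [g, if_neg]
        rintro ⟨-, -, -, hcop⟩
        exact (sup_prime_eq_top_iff hp).mp (sup_mul_eq_top_iff'.mp hcop).1 hdvd
      simp [h1, hgd, hdvd]
    · have h1 : g (p * r) Q I = g r Q I := by
        rw [g, g]
        refine if_congr (and_congr_right fun _ => and_congr_right fun _ =>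
          and_congr_right fun _ => ?_) rfl rfl
        rw [sup_mul_eq_top_iff', sup_prime_eq_top_iff hp]
        exact ⟨fun h => h.2, fun h => ⟨hdvd, h⟩⟩
      simp [h1, hgd, hdvd]
  have hgd0 : ∀ I ∉ bigFinset k Q, gd I = 0 := by
    intro I hI
    simp only [hgd]
    split
    · exact g_eq_zero_of_not_mem hI
    · rfl
  have hsum_gd : Summable gd := summable_of_ne_finset_zero (s := bigFinset k Q) hgd0
  have h1 : cnt r Q = cnt (p * r) Q + ∑' I, gd I := by
    rw [cnt, tsum_congr hsplit, Summable.tsum_add (summable_g _ _) hsum_gd, cnt]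
  rw [h1]
  congr 1
  -- reindex: ∑' I, gd I = cnt (p*r) (Q / Np)
  have hinj : Function.Injective (fun m : Ideal (𝓞 k) => p * m) :=
    mul_right_injective₀ hp.ne_zero
  have hsupp : Function.support gd ⊆ Set.range (fun m : Ideal (𝓞 k) => p * m) := by
    intro I hI
    rcases em (p ∣ I) with ⟨m, rfl⟩ | h
    · exact ⟨m, rfl⟩
    · exact absurd (by simp [hgd, h]) hI
  rw [cnt, ← hinj.tsum_eq hsupp]
  refine tsum_congr fun m => ?_
  have : gd (p * m) = g r Q (p * m) := if_pos ⟨m, rfl⟩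
  rw [this, g, g, if_congr (cond_iff hp hpr Q m) rfl rfl]
variable {k : Type*} [Field k] [NumberField k]

noncomputable def fdiv (r : Ideal (𝓞 k)) : Finset (Ideal (𝓞 k)) := (factors r).toFinset

lemma fdiv_top : fdiv (⊤ : Ideal (𝓞 k)) = ∅ := by
  rw [fdiv, factors_eq_normalizedFactors, ← Ideal.one_eq_top, normalizedFactors_one]
  rfl

lemma mem_fdiv {r q : Ideal (𝓞 k)} (hr : r ≠ 0) : q ∈ fdiv r ↔ Prime q ∧ q ∣ r := by
  rw [fdiv, factors_eq_normalizedFactors, Multiset.mem_toFinset, mem_normalizedFactors_iff hr]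

lemma fdiv_mul {p r : Ideal (𝓞 k)} (hp : Prime p) (hr : r ≠ 0) :
    fdiv (p * r) = insert p (fdiv r) := by
  rw [fdiv, fdiv, factors_eq_normalizedFactors, factors_eq_normalizedFactors,
    normalizedFactors_mul hp.ne_zero hr, normalizedFactors_irreducible hp.irreducible,
    normalize_eq, Multiset.singleton_add, Multiset.toFinset_cons]

lemma prime_of_mem_fdiv {r q : Ideal (𝓞 k)} (hq : q ∈ fdiv r) : Prime q :=
  prime_of_factor q (Multiset.mem_toFinset.mp hq)
lemma rpow_aux1 : (4:ℝ)/3 ≤ 2 ^ ((2:ℝ)/3) := by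
  have h0 : (0:ℝ) ≤ 2 ^ ((2:ℝ)/3) := Real.rpow_nonneg (by norm_num) _
  refine le_of_pow_le_pow_left₀ (n := 3) (by norm_num) h0 ?_
  rw [← Real.rpow_natCast ((2:ℝ) ^ ((2:ℝ)/3)) 3, ← Real.rpow_mul (by norm_num : (0:ℝ) ≤ 2)]
  norm_num

lemma rpow_neg_le_34 {x β : ℝ} (hx : 2 ≤ x) (hβ : 2/3 ≤ β) : x ^ (-β) ≤ 3/4 := by
  have hx0 : (0:ℝ) < x := by linarith
  have h1 : (4:ℝ)/3 ≤ x ^ β := by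
    calc (4:ℝ)/3 ≤ 2 ^ ((2:ℝ)/3) := rpow_aux1
    _ ≤ 2 ^ β := Real.rpow_le_rpow_of_exponent_le (by norm_num) hβ
    _ ≤ x ^ β := Real.rpow_le_rpow (by norm_num) hx (by linarith)
  rw [Real.rpow_neg hx0.le]
  rw [show (3:ℝ)/4 = ((4:ℝ)/3)⁻¹ by norm_num]
  exact inv_anti₀ (by norm_num) h1

lemma rpow_aux2 : (2:ℝ) ≤ 6 ^ ((5:ℝ)/12) := by
  have h0 : (0:ℝ) ≤ 6 ^ ((5:ℝ)/12) := Real.rpow_nonneg (by norm_num) _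
  refine le_of_pow_le_pow_left₀ (n := 12) (by norm_num) h0 ?_
  rw [← Real.rpow_natCast ((6:ℝ) ^ ((5:ℝ)/12)) 12, ← Real.rpow_mul (by norm_num : (0:ℝ) ≤ 6)]
  norm_num

noncomputable def th (r : Ideal (𝓞 k)) : ℝ :=
  ∏ p ∈ fdiv r, (1 + 1 / (Ideal.absNorm p : ℝ))⁻¹

noncomputable def Er (β : ℝ) (r : Ideal (𝓞 k)) : ℝ :=
  ∏ p ∈ fdiv r, (1 - (Ideal.absNorm p : ℝ) ^ (-β))⁻¹

lemma two_le_cast_absNorm {p : Ideal (𝓞 k)} (hp : Prime p) : (2:ℝ) ≤ (Ideal.absNorm p : ℝ) := by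
  exact_mod_cast two_le_absNorm' hp

lemma th_pos (r : Ideal (𝓞 k)) : 0 < th r := by
  refine Finset.prod_pos fun p hp => ?_
  have h2 := two_le_cast_absNorm (prime_of_mem_fdiv hp)
  positivity

lemma th_le_one (r : Ideal (𝓞 k)) : th r ≤ 1 := by
  refine Finset.prod_le_one (fun p hp => ?_) (fun p hp => ?_)
  · have h2 := two_le_cast_absNorm (prime_of_mem_fdiv hp)
    positivity
  · have h2 := two_le_cast_absNorm (prime_of_mem_fdiv hp)
    rw [inv_le_one_iff₀]
    right
    have : 0 < (Ideal.absNorm p : ℝ) := by linarith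
    have : 0 ≤ 1 / (Ideal.absNorm p : ℝ) := by positivity
    linarith

lemma Er_factor_pos {β : ℝ} (hβ : 2/3 ≤ β) {p : Ideal (𝓞 k)} (hp : Prime p) :
    0 < 1 - (Ideal.absNorm p : ℝ) ^ (-β) := by
  have h34 := rpow_neg_le_34 (two_le_cast_absNorm hp) hβ
  linarith

lemma Er_factor_one_le {β : ℝ} (hβ : 2/3 ≤ β) {p : Ideal (𝓞 k)} (hp : Prime p) :
    1 ≤ (1 - (Ideal.absNorm p : ℝ) ^ (-β))⁻¹ := by
  rw [one_le_inv_iff₀]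
  constructor
  · exact Er_factor_pos hβ hp
  · have : 0 ≤ (Ideal.absNorm p : ℝ) ^ (-β) :=
      Real.rpow_nonneg (by linarith [two_le_cast_absNorm hp]) _
    linarith

lemma Er_factor_le_four {β : ℝ} (hβ : 2/3 ≤ β) {p : Ideal (𝓞 k)} (hp : Prime p) :
    (1 - (Ideal.absNorm p : ℝ) ^ (-β))⁻¹ ≤ 4 := by
  have h34 := rpow_neg_le_34 (two_le_cast_absNorm hp) hβ
  rw [show (4:ℝ) = ((4:ℝ)⁻¹)⁻¹ by norm_num]
  exact inv_anti₀ (by norm_num) (by linarith)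

lemma Er_one_le {β : ℝ} (hβ : 2/3 ≤ β) (r : Ideal (𝓞 k)) : 1 ≤ Er β r := by
  rw [Er]
  have := Finset.prod_le_prod (s := fdiv r) (f := fun _ => (1:ℝ))
    (g := fun p => (1 - (Ideal.absNorm p : ℝ) ^ (-β))⁻¹)
    (fun i _ => by norm_num) (fun p hp => Er_factor_one_le hβ (prime_of_mem_fdiv hp))
  simpa using this

lemma cnt_eq_zero_of_lt_one {r : Ideal (𝓞 k)} {Q : ℝ} (hQ : Q < 1) : cnt r Q = 0 := by
  rw [cnt]
  have : ∀ I : Ideal (𝓞 k), g r Q I = 0 := by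
    intro I
    rw [g, if_neg]
    rintro ⟨h0, -, hle, -⟩
    have h1 : 1 ≤ Ideal.absNorm I :=
      Nat.one_le_iff_ne_zero.mpr (fun h => h0 (Ideal.absNorm_eq_zero_iff.mp h))
    have : (1:ℝ) ≤ (Ideal.absNorm I : ℝ) := by exact_mod_cast h1
    linarith
  rw [tsum_congr this, tsum_zero]

lemma key (c K β : ℝ) (hc : 0 ≤ c) (hcK : c ≤ K) (hβl : 2/3 ≤ β) (hβu : β ≤ 1)
    (hbase : ∀ Q : ℝ, 0 ≤ Q → |cnt (⊤ : Ideal (𝓞 k)) Q - c * Q| ≤ K * Q ^ β) :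
    ∀ r : Ideal (𝓞 k), r ≠ 0 → Squarefree r →
      ∀ Q : ℝ, 0 ≤ Q → |cnt r Q - c * th r * Q| ≤ K * Er β r * Q ^ β := by
  have hK : 0 ≤ K := le_trans hc hcK
  intro r
  induction r using UniqueFactorizationMonoid.induction_on_prime with
  | h₁ => intro h; exact absurd rfl h
  | h₂ x hx =>
    intro _ _ Q hQ
    have hxt : x = ⊤ := Ideal.isUnit_iff.mp hx
    subst hxt
    have h1 : th (⊤ : Ideal (𝓞 k)) = 1 := by rw [th, fdiv_top, Finset.prod_empty]
    have h2 : Er β (⊤ : Ideal (𝓞 k)) = 1 := by rw [Er, fdiv_top, Finset.prod_empty]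
    rw [h1, h2]
    simpa using hbase Q hQ
  | h₃ a p ha0 hp IH =>
    intro _ hsf
    have hpa : ¬ p ∣ a := ((squarefree_prime_mul_iff hp).mp hsf).1
    have hsfa : Squarefree a := ((squarefree_prime_mul_iff hp).mp hsf).2
    have IHa := IH ha0 hsfa
    set x : ℝ := (Ideal.absNorm p : ℝ) with hxdef
    have hx2 : (2:ℝ) ≤ x := two_le_cast_absNorm hp
    have hx0 : (0:ℝ) < x := by linarith
    have hpnot : p ∉ fdiv a := by
      intro hmem
      exact hpa ((mem_fdiv ha0).mp hmem).2
    have hthm : th (p * a) = (1 + 1/x)⁻¹ * th a := by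
      rw [th, th, fdiv_mul hp ha0, Finset.prod_insert hpnot]
    have hErm : Er β (p * a) = (1 - x ^ (-β))⁻¹ * Er β a := by
      rw [Er, Er, fdiv_mul hp ha0, Finset.prod_insert hpnot]
    have hy34 : x ^ (-β) ≤ 3/4 := rpow_neg_le_34 hx2 hβl
    have hy0 : 0 ≤ x ^ (-β) := Real.rpow_nonneg hx0.le _
    have h1y : 0 < 1 - x ^ (-β) := by linarith
    have hEra : Er β a = Er β (p * a) * (1 - x ^ (-β)) := by
      rw [hErm]; field_simp
    have htha : th a = th (p * a) * (1 + 1/x) := by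
      have h1x : (0:ℝ) < 1 + 1/x := by positivity
      rw [hthm]; field_simp
    -- inner strong induction on ⌊Q⌋₊
    have main : ∀ n : ℕ, ∀ Q : ℝ, 0 ≤ Q → ⌊Q⌋₊ = n →
        |cnt (p * a) Q - c * th (p * a) * Q| ≤ K * Er β (p * a) * Q ^ β := by
      intro n
      induction n using Nat.strong_induction_on with
      | _ n ih =>
        intro Q hQ0 hfl
        by_cases hQ1 : Q < 1
        · -- small Q
          rw [cnt_eq_zero_of_lt_one hQ1, zero_sub, abs_neg, abs_of_nonneg (by
            have := (th_pos (p * a)).le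
            positivity)]
          have hQβ : Q ≤ Q ^ β := by
            rcases eq_or_lt_of_le hQ0 with h | h
            · rw [← h, Real.zero_rpow (by linarith : β ≠ 0)]
            · calc Q = Q ^ (1:ℝ) := (Real.rpow_one Q).symm
              _ ≤ Q ^ β := Real.rpow_le_rpow_of_exponent_ge h (by linarith) hβu
          calc c * th (p * a) * Q ≤ c * Q :=
                mul_le_mul_of_nonneg_right
                  (mul_le_of_le_one_right hc (th_le_one (p * a))) hQ0
          _ ≤ K * Q := mul_le_mul_of_nonneg_right hcK hQ0
          _ ≤ K * Q ^ β := mul_le_mul_of_nonneg_left hQβ hK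
          _ ≤ K * Er β (p * a) * Q ^ β :=
                mul_le_mul_of_nonneg_right
                  (le_mul_of_one_le_right hK (Er_one_le hβl (p * a)))
                  (Real.rpow_nonneg hQ0 β)
        · -- large Q
          push_neg at hQ1
          have hrec := cnt_rec hp hpa Q
          have hfl1 : 1 ≤ ⌊Q⌋₊ := Nat.le_floor (by exact_mod_cast hQ1)
          have hfl' : ⌊Q / x⌋₊ = n / Ideal.absNorm p := by
            rw [hxdef, Nat.floor_div_natCast, hfl]
          have hlt : n / Ideal.absNorm p < n := by
            refine Nat.div_lt_self ?_ (two_le_absNorm' hp)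
            omega
          have IH2 := ih _ hlt (Q / x) (by positivity) hfl'
          have IHaQ := IHa Q hQ0
          have heq : cnt (p * a) Q - c * th (p * a) * Q =
              (cnt a Q - c * th a * Q) - (cnt (p * a) (Q / x) - c * th (p * a) * (Q / x)) := by
            have hth : th a * Q = th (p * a) * Q + th (p * a) * (Q / x) := by
              rw [htha]; field_simp
            linear_combination (-1 : ℝ) * hrec + c * hth
          rw [heq]
          have htri : |(cnt a Q - c * th a * Q) - (cnt (p * a) (Q / x) - c * th (p * a) * (Q / x))|
              ≤ |cnt a Q - c * th a * Q| + |cnt (p * a) (Q / x) - c * th (p * a) * (Q / x)| := by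
            rw [sub_eq_add_neg]
            refine (abs_add_le _ _).trans ?_
            rw [abs_neg]
          refine htri.trans ?_
          have hdiv : (Q / x) ^ β = Q ^ β * x ^ (-β) := by
            rw [Real.div_rpow hQ0 hx0.le, Real.rpow_neg hx0.le, div_eq_mul_inv]
          calc |cnt a Q - c * th a * Q| + |cnt (p * a) (Q / x) - c * th (p * a) * (Q / x)|
              ≤ K * Er β a * Q ^ β + K * Er β (p * a) * (Q / x) ^ β := add_le_add IHaQ IH2
          _ = K * Er β (p * a) * Q ^ β := by
              rw [hdiv, hEra]; ring
    intro Q hQ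
    exact main ⌊Q⌋₊ Q hQ rfl

lemma large_factor_bound {x γ β : ℝ} (hx : 6 ≤ x) (hγ0 : 0 < γ) (hβ : 2/3 ≤ β)
    (hβγ : 5/12 ≤ β - γ) : (1 - x ^ (-β))⁻¹ ≤ 1 + x ^ (-γ) := by
  have hx0 : (0:ℝ) < x := by linarith
  have hy34 : x ^ (-β) ≤ 3/4 := rpow_neg_le_34 (by linarith) hβ
  have hy0 : 0 ≤ x ^ (-β) := Real.rpow_nonneg hx0.le _
  have hz0 : 0 ≤ x ^ (-γ) := Real.rpow_nonneg hx0.le _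
  have hz1 : x ^ (-γ) ≤ 1 :=
    Real.rpow_le_one_of_one_le_of_nonpos (by linarith) (by linarith)
  have h2 : (2:ℝ) ≤ x ^ (β - γ) := by
    calc (2:ℝ) ≤ 6 ^ ((5:ℝ)/12) := rpow_aux2
    _ ≤ x ^ ((5:ℝ)/12) := Real.rpow_le_rpow (by norm_num) hx (by norm_num)
    _ ≤ x ^ (β - γ) := Real.rpow_le_rpow_of_exponent_le (by linarith) hβγ
  have hzy : 2 * x ^ (-β) ≤ x ^ (-γ) := by
    have : x ^ (-γ) = x ^ (-β) * x ^ (β - γ) := by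
      rw [← Real.rpow_add hx0]; ring_nf
    rw [this]
    nlinarith
  have h1y : 0 < 1 - x ^ (-β) := by linarith
  rw [inv_eq_one_div, div_le_iff₀ h1y]
  nlinarith

noncomputable def smallP (k : Type*) [Field k] [NumberField k] : Finset (Ideal (𝓞 k)) :=
  (Ideal.finite_setOf_absNorm_le (S := 𝓞 k) 5).toFinset

lemma Er_le_prod {β γ : ℝ} (hβ : 2/3 ≤ β) (hγ0 : 0 < γ) (hβγ : 5/12 ≤ β - γ)
    (r : Ideal (𝓞 k)) :
    Er β r ≤ 4 ^ (smallP k).card * ∏ p ∈ fdiv r, (1 + (Ideal.absNorm p : ℝ) ^ (-γ)) := by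
  classical
  set f : Ideal (𝓞 k) → ℝ := fun p => (1 - (Ideal.absNorm p : ℝ) ^ (-β))⁻¹ with hf
  set z : Ideal (𝓞 k) → ℝ := fun p => 1 + (Ideal.absNorm p : ℝ) ^ (-γ) with hz
  have hsplit : Er β r = (∏ p ∈ (fdiv r).filter (fun p => Ideal.absNorm p ≤ 5), f p) *
      ∏ p ∈ (fdiv r).filter (fun p => ¬ Ideal.absNorm p ≤ 5), f p := by
    rw [Er, ← Finset.prod_filter_mul_prod_filter_not (fdiv r) (fun p => Ideal.absNorm p ≤ 5)]
  have hsm : ∏ p ∈ (fdiv r).filter (fun p => Ideal.absNorm p ≤ 5), f p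
      ≤ (4:ℝ) ^ (smallP k).card := by
    have h4 : ∏ p ∈ (fdiv r).filter (fun p => Ideal.absNorm p ≤ 5), f p
        ≤ ∏ _p ∈ (fdiv r).filter (fun p => Ideal.absNorm p ≤ 5), (4:ℝ) := by
      refine Finset.prod_le_prod (fun p hp => ?_) (fun p hp => ?_)
      · have hprime := prime_of_mem_fdiv (Finset.mem_filter.mp hp).1
        exact (inv_pos.mpr (Er_factor_pos hβ hprime)).le
      · exact Er_factor_le_four hβ (prime_of_mem_fdiv (Finset.mem_filter.mp hp).1)
    rw [Finset.prod_const] at h4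
    refine h4.trans (pow_le_pow_right₀ (by norm_num) (Finset.card_le_card ?_))
    intro p hp
    simp only [smallP, Set.Finite.mem_toFinset, Set.mem_setOf_eq]
    exact (Finset.mem_filter.mp hp).2
  have hlg : ∏ p ∈ (fdiv r).filter (fun p => ¬ Ideal.absNorm p ≤ 5), f p
      ≤ ∏ p ∈ fdiv r, z p := by
    have h1 : ∏ p ∈ (fdiv r).filter (fun p => ¬ Ideal.absNorm p ≤ 5), f p
        ≤ ∏ p ∈ (fdiv r).filter (fun p => ¬ Ideal.absNorm p ≤ 5), z p := by
      refine Finset.prod_le_prod (fun p hp => ?_) (fun p hp => ?_)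
      · have hprime := prime_of_mem_fdiv (Finset.mem_filter.mp hp).1
        exact (inv_pos.mpr (Er_factor_pos hβ hprime)).le
      · have h6 : 6 ≤ Ideal.absNorm p := by
          have := (Finset.mem_filter.mp hp).2
          omega
        exact large_factor_bound (by exact_mod_cast h6) hγ0 hβ hβγ
    refine h1.trans ?_
    have hone : ∀ p ∈ fdiv r, (1:ℝ) ≤ z p := by
      intro p hp
      have hN : (0:ℝ) < (Ideal.absNorm p : ℝ) := by
        have := two_le_cast_absNorm (prime_of_mem_fdiv hp)
        linarith
      have : 0 ≤ (Ideal.absNorm p : ℝ) ^ (-γ) := Real.rpow_nonneg hN.le _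
      simp only [hz]
      linarith
    have hsub : (fdiv r).filter (fun p => ¬ Ideal.absNorm p ≤ 5) ⊆ fdiv r :=
      Finset.filter_subset _ _
    rw [← Finset.prod_sdiff hsub]
    have hz0 : 0 ≤ ∏ p ∈ (fdiv r).filter (fun p => ¬ Ideal.absNorm p ≤ 5), z p :=
      Finset.prod_nonneg fun p hp => le_trans zero_le_one (hone p (hsub hp))
    have hone' : (1:ℝ) ≤ ∏ p ∈ fdiv r \ (fdiv r).filter (fun p => ¬ Ideal.absNorm p ≤ 5), z p := by
      have := Finset.prod_le_prod (s := fdiv r \ (fdiv r).filter (fun p => ¬ Ideal.absNorm p ≤ 5))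
        (f := fun _ => (1:ℝ)) (g := z) (fun i _ => by norm_num)
        (fun p hp => hone p (Finset.mem_sdiff.mp hp).1)
      simpa using this
    exact le_mul_of_one_le_left hz0 hone'
  rw [hsplit]
  refine mul_le_mul hsm hlg (Finset.prod_nonneg fun p hp => ?_) (by positivity)
  have hprime := prime_of_mem_fdiv (Finset.mem_filter.mp hp).1
  exact (inv_pos.mpr (Er_factor_pos hβ hprime)).le

lemma sigma_ge {γ : ℝ} (hγ : 0 < γ) {r : Ideal (𝓞 k)} (hr0 : r ≠ 0) :
    ∏ p ∈ fdiv r, (1 + (Ideal.absNorm p : ℝ) ^ (-γ)) ≤ sigmaK (-γ) r := by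
  classical
  have hNr : 0 < Ideal.absNorm r :=
    Nat.pos_of_ne_zero (fun h => hr0 (Ideal.absNorm_eq_zero_iff.mp h))
  set Dfin : Finset (Ideal (𝓞 k)) :=
    (Ideal.finite_setOf_absNorm_le (S := 𝓞 k) (Ideal.absNorm r)).toFinset.filter (· ∣ r)
    with hDfin
  have hmemD : ∀ d : Ideal (𝓞 k), d ∣ r → d ∈ Dfin := by
    intro d hd
    have hle : Ideal.absNorm d ≤ Ideal.absNorm r := by
      refine Nat.le_of_dvd hNr ?_
      exact Ideal.absNorm_dvd_absNorm_of_le (Ideal.le_of_dvd hd)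
    simp only [hDfin, Finset.mem_filter, Set.Finite.mem_toFinset, Set.mem_setOf_eq]
    exact ⟨hle, hd⟩
  have hts : sigmaK (-γ) r = ∑ d ∈ Dfin, ((Ideal.absNorm d : ℝ) ^ (-γ)) := by
    rw [sigmaK]
    rw [tsum_eq_sum (s := Dfin) (fun d hd => by
      rw [if_neg]; intro hdvd; exact hd (hmemD d hdvd))]
    refine Finset.sum_congr rfl fun d hd => ?_
    rw [if_pos (Finset.mem_filter.mp hd).2]
  -- expand the product
  have hexp : ∏ p ∈ fdiv r, (1 + (Ideal.absNorm p : ℝ) ^ (-γ))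
      = ∑ t ∈ (fdiv r).powerset, ∏ p ∈ t, (Ideal.absNorm p : ℝ) ^ (-γ) := by
    have := Finset.prod_add (fun p : Ideal (𝓞 k) => (Ideal.absNorm p : ℝ) ^ (-γ))
      (fun _ => (1:ℝ)) (fdiv r)
    simp only [Finset.prod_const_one, mul_one] at this
    rw [← this]
    refine Finset.prod_congr rfl fun p _ => by ring
  rw [hexp, hts]
  -- realize each subset product as a norm of a squarefree divisor
  have hval : ∀ t ∈ (fdiv r).powerset,
      ∏ p ∈ t, (Ideal.absNorm p : ℝ) ^ (-γ) = ((Ideal.absNorm (∏ p ∈ t, p) : ℝ)) ^ (-γ) := by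
    intro t ht
    have hprime : ∀ p ∈ t, Prime p := fun p hp =>
      prime_of_mem_fdiv ((Finset.mem_powerset.mp ht) hp)
    have hpos : ∀ p ∈ t, (0:ℝ) ≤ (Ideal.absNorm p : ℝ) := fun p hp => by
      have := two_le_cast_absNorm (hprime p hp)
      linarith
    rw [_root_.map_prod Ideal.absNorm, Nat.cast_prod]
    exact Real.finset_prod_rpow t _ hpos _
  rw [Finset.sum_congr rfl hval]
  -- push through the injection t ↦ ∏ p ∈ t, p
  have hinj : ∀ t ∈ (fdiv r).powerset, ∀ t' ∈ (fdiv r).powerset,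
      (∏ p ∈ t, p) = (∏ p ∈ t', p) → t = t' := by
    intro t ht t' ht' heq
    have hsub : ∀ (s s' : Finset (Ideal (𝓞 k))), s ⊆ fdiv r → s' ⊆ fdiv r →
        (∏ p ∈ s, p) = (∏ p ∈ s', p) → s ⊆ s' := by
      intro s s' hs hs' he q hq
      have hqp : Prime q := prime_of_mem_fdiv (hs hq)
      have hdvd : q ∣ ∏ p ∈ s', p := he ▸ Finset.dvd_prod_of_mem _ hq
      obtain ⟨q', hq', hqq'⟩ := (Prime.dvd_finset_prod_iff hqp _).mp hdvd
      have : q = q' :=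
        (prime_dvd_prime_iff_eq hqp (prime_of_mem_fdiv (hs' hq'))).mp hqq'
      exact this ▸ hq'
    exact le_antisymm
      (hsub t t' (Finset.mem_powerset.mp ht) (Finset.mem_powerset.mp ht') heq)
      (hsub t' t (Finset.mem_powerset.mp ht') (Finset.mem_powerset.mp ht) heq.symm)
  have himg : ∑ d ∈ (fdiv r).powerset.image (fun t => ∏ p ∈ t, p),
      ((Ideal.absNorm d : ℝ)) ^ (-γ)
      = ∑ t ∈ (fdiv r).powerset, ((Ideal.absNorm (∏ p ∈ t, p) : ℝ)) ^ (-γ) :=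
    Finset.sum_image hinj
  rw [← himg]
  refine Finset.sum_le_sum_of_subset_of_nonneg ?_ (fun d _ _ => Real.rpow_nonneg (by positivity) _)
  intro d hd
  obtain ⟨t, ht, rfl⟩ := Finset.mem_image.mp hd
  refine hmemD _ ?_
  refine Finset.prod_primes_dvd r (fun p hp => prime_of_mem_fdiv (Finset.mem_powerset.mp ht hp))
    (fun p hp => ((mem_fdiv hr0).mp (Finset.mem_powerset.mp ht hp)).2)

lemma fdiv_def (r : Ideal (𝓞 k)) : fdiv r = (factors r).toFinset := rfl

lemma cnt_top_eq (Q : ℝ) :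
    cnt (⊤ : Ideal (𝓞 k)) Q
      = ∑' I : Ideal (𝓞 k),
          if I ≠ 0 ∧ Squarefree I ∧ (Ideal.absNorm I : ℝ) ≤ Q then (1:ℝ) else 0 := by
  refine tsum_congr fun I => ?_
  rw [g]
  refine if_congr ?_ rfl rfl
  simp

lemma th_eq_div {r : Ideal (𝓞 k)} (hr0 : r ≠ 0) :
    (Ideal.absNorm r : ℝ) / kappaK r = th r := by
  have hNr : (0:ℝ) < (Ideal.absNorm r : ℝ) := by
    have : Ideal.absNorm r ≠ 0 := fun h => hr0 (Ideal.absNorm_eq_zero_iff.mp h)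
    exact_mod_cast Nat.pos_of_ne_zero this
  have hP : (0:ℝ) < ∏ p ∈ fdiv r, (1 + 1/(Ideal.absNorm p : ℝ)) := by
    refine Finset.prod_pos fun p hp => ?_
    have := two_le_cast_absNorm (prime_of_mem_fdiv hp)
    positivity
  rw [kappaK, th, ← fdiv_def, Finset.prod_inv_distrib]
  rw [div_mul_eq_div_div, div_self hNr.ne', one_div]

lemma cnt_rfl (r : Ideal (𝓞 k)) (Q : ℝ) :
    (∑' I : Ideal (𝓞 k),
        if I ≠ 0 ∧ Squarefree I ∧ (Ideal.absNorm I : ℝ) ≤ Q ∧ I ⊔ r = ⊤ then (1:ℝ) else 0)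
      = cnt r Q := rfl

end Stmt15Aux

open Stmt15Aux

/-- Given the squarefree counting estimate (degree `n_k ≥ 3`), for every squarefree
nonzero ideal `r`:
`∑_{N n ≤ Q, (n,r)=(1)} μ_k(n)² = (s_k/ζ_k(2)) (N r/κ(r)) Q
  + O(Q^{1-1/n_k} σ_{-1/(n_k+1)}(r))`, uniformly in `r`. -/
theorem stmt15 (hdeg : 3 ≤ Module.finrank ℚ k) (sk C : ℝ) (hsk : 0 < sk)
    (hsqcount : ∀ Q : ℝ, 1 ≤ Q →
      |(∑' I : Ideal (𝓞 k),
          if I ≠ 0 ∧ Squarefree I ∧ (Ideal.absNorm I : ℝ) ≤ Q then (1 : ℝ) else 0)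
        - sk / zetaK2 k * Q| ≤ C * Q ^ (1 - 1 / (Module.finrank ℚ k : ℝ))) :
    ∃ C₁ : ℝ, ∀ r : Ideal (𝓞 k), r ≠ 0 → Squarefree r → ∀ Q : ℝ, 1 ≤ Q →
      |(∑' I : Ideal (𝓞 k),
          if I ≠ 0 ∧ Squarefree I ∧ (Ideal.absNorm I : ℝ) ≤ Q ∧ I ⊔ r = ⊤ then (1 : ℝ)
          else 0)
        - sk / zetaK2 k * ((Ideal.absNorm r : ℝ) / kappaK r) * Q|
      ≤ C₁ * Q ^ (1 - 1 / (Module.finrank ℚ k : ℝ)) *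
          sigmaK (-(1 / ((Module.finrank ℚ k : ℝ) + 1))) r := by
  classical
  have hn3 : (3:ℝ) ≤ (Module.finrank ℚ k : ℝ) := by exact_mod_cast hdeg
  set n : ℝ := (Module.finrank ℚ k : ℝ) with hn
  set β : ℝ := 1 - 1/n with hβ
  set γ : ℝ := 1/(n+1) with hγ
  have hn0 : (0:ℝ) < n := by linarith
  have h13 : 1/n ≤ 1/3 := by
    rw [div_le_div_iff₀ hn0 (by norm_num)]; linarith
  have h14 : 1/(n+1) ≤ 1/4 := by
    rw [div_le_div_iff₀ (by linarith) (by norm_num)]; linarith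
  have hβl : 2/3 ≤ β := by rw [hβ]; linarith
  have hβu : β ≤ 1 := by
    rw [hβ]
    have : 0 < 1/n := by positivity
    linarith
  have hγ0 : 0 < γ := by rw [hγ]; positivity
  have hβγ : 5/12 ≤ β - γ := by rw [hβ, hγ]; linarith
  set c : ℝ := sk / zetaK2 k with hc
  have hz0 : 0 ≤ zetaK2 k := by
    refine tsum_nonneg fun I => ?_
    split <;> positivity
  have hc0 : 0 ≤ c := div_nonneg hsk.le hz0
  have hC0 : 0 ≤ C := by
    have h := hsqcount 1 le_rfl
    rw [Real.one_rpow] at h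
    have := abs_nonneg ((∑' I : Ideal (𝓞 k),
        if I ≠ 0 ∧ Squarefree I ∧ (Ideal.absNorm I : ℝ) ≤ (1:ℝ) then (1 : ℝ) else 0)
        - sk / zetaK2 k * 1)
    linarith
  have hQle : ∀ Q : ℝ, 0 ≤ Q → Q < 1 → Q ≤ Q ^ β := by
    intro Q hQ0 hQ1
    rcases eq_or_lt_of_le hQ0 with h | h
    · rw [← h, Real.zero_rpow (by rw [hβ]; intro hh; rw [sub_eq_zero] at hh; linarith
        [h13, hn0] : β ≠ 0)]
    · calc Q = Q ^ (1:ℝ) := (Real.rpow_one Q).symm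
      _ ≤ Q ^ β := Real.rpow_le_rpow_of_exponent_ge h (by linarith) hβu
  have hbase : ∀ Q : ℝ, 0 ≤ Q → |cnt (⊤ : Ideal (𝓞 k)) Q - c * Q| ≤ (C + c) * Q ^ β := by
    intro Q hQ
    have hQβ0 : 0 ≤ Q ^ β := Real.rpow_nonneg hQ _
    by_cases h1 : 1 ≤ Q
    · rw [cnt_top_eq]
      refine (hsqcount Q h1).trans ?_
      nlinarith
    · push_neg at h1
      rw [cnt_eq_zero_of_lt_one h1, zero_sub, abs_neg, abs_of_nonneg (mul_nonneg hc0 hQ)]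
      have hQβ := hQle Q hQ h1
      nlinarith
  refine ⟨(C + c) * 4 ^ (smallP k).card, ?_⟩
  intro r hr0 hsf Q hQ1
  have hQ0 : (0:ℝ) ≤ Q := by linarith
  have hQβ0 : 0 ≤ Q ^ β := Real.rpow_nonneg hQ0 _
  have hkey := key c (C + c) β hc0 (by linarith) hβl hβu hbase r hr0 hsf Q hQ0
  rw [← cnt_rfl r Q] at hkey
  rw [← th_eq_div hr0] at hkey
  refine hkey.trans ?_
  have h2 := Er_le_prod (k := k) hβl hγ0 hβγ r
  have h3 := sigma_ge hγ0 hr0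
  have hP0 : (0:ℝ) ≤ ∏ p ∈ fdiv r, (1 + (Ideal.absNorm p : ℝ) ^ (-γ)) := by
    refine Finset.prod_nonneg fun p hp => ?_
    have := two_le_cast_absNorm (prime_of_mem_fdiv hp)
    have : (0:ℝ) ≤ (Ideal.absNorm p : ℝ) ^ (-γ) := Real.rpow_nonneg (by linarith) _
    linarith
  have h4 : (0:ℝ) ≤ (4:ℝ) ^ (smallP k).card := by positivity
  have hKc : 0 ≤ C + c := by linarith
  calc (C + c) * Er β r * Q ^ β
      ≤ (C + c) * ((4:ℝ) ^ (smallP k).card *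
          ∏ p ∈ fdiv r, (1 + (Ideal.absNorm p : ℝ) ^ (-γ))) * Q ^ β := by
        refine mul_le_mul_of_nonneg_right (mul_le_mul_of_nonneg_left h2 hKc) hQβ0
  _ ≤ (C + c) * ((4:ℝ) ^ (smallP k).card * sigmaK (-γ) r) * Q ^ β := by
        refine mul_le_mul_of_nonneg_right
          (mul_le_mul_of_nonneg_left (mul_le_mul_of_nonneg_left h3 h4) hKc) hQβ0
  _ = (C + c) * 4 ^ (smallP k).card * Q ^ β * sigmaK (-γ) r := by ring
end
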